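/- Let r be a natural number with 0 ≤ r < q^3. The set I(r) = {(i,j) ∈ ℕ × ℕ : j ≤ q−1 and iq + j(q+1) ≤ r} satisfies: for r ≥ 2g where g = q(q−1)/2, |I(r)| = r + 1 − g. -/

import Mathlib

open Finset

private def hermCnt (q r : ℕ) : ℕ :=
  ∑ j ∈ Finset.range q, (if (q+1)*j ≤ r then (r - (q+1)*j)/q + 1 else 0)

private lemma herm_inner (q r j : ℕ) (hq : 0 < q) :
    ((Finset.range (r+1)).filter (fun i => i * q + j * (q+1) ≤ r)).card
      = if (q+1)*j ≤ r then (r - (q+1)*j)/q + 1 else 0 := by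
  split_ifs with h
  · have : (Finset.range (r+1)).filter (fun i => i * q + j * (q+1) ≤ r)
        = Finset.range ((r - (q+1)*j)/q + 1) := by
      ext i
      simp only [mem_filter, mem_range]
      constructor
      · rintro ⟨-, h2⟩
        have : i * q ≤ r - (q+1)*j := by
          have : j * (q+1) = (q+1)*j := by ring
          omega
        have := (Nat.le_div_iff_mul_le hq).2 this
        omega
      · intro hi
        have hi' : i ≤ (r - (q+1)*j)/q := by omega
        have h2 : i * q ≤ r - (q+1)*j := (Nat.le_div_iff_mul_le hq).1 hi'
        have h3 : i * q + j * (q+1) ≤ r := by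
          have : j * (q+1) = (q+1)*j := by ring
          omega
        have h4 : i ≤ i * q := Nat.le_mul_of_pos_right i hq
        exact ⟨by omega, h3⟩
    rw [this, Finset.card_range]
  · have : (Finset.range (r+1)).filter (fun i => i * q + j * (q+1) ≤ r) = ∅ := by
      ext i
      simp only [mem_filter, mem_range, Finset.notMem_empty, iff_false, not_and]
      intro _
      have : j * (q+1) = (q+1)*j := by ring
      omega
    simp [this]

private lemma card_eq_hermCnt (q r : ℕ) (hq : 2 ≤ q) :
    Nat.card {ij : ℕ × ℕ // ij.2 ≤ q - 1 ∧ ij.1 * q + ij.2 * (q + 1) ≤ r}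
      = hermCnt q r := by
  classical
  have hq0 : 0 < q := by omega
  set F : Finset (ℕ × ℕ) :=
    (Finset.range (r+1) ×ˢ Finset.range q).filter
      (fun ij => ij.1 * q + ij.2 * (q + 1) ≤ r) with hF
  have hset : {ij : ℕ × ℕ | ij.2 ≤ q - 1 ∧ ij.1 * q + ij.2 * (q + 1) ≤ r} = ↑F := by
    ext ⟨i, j⟩
    simp only [hF, Set.mem_setOf_eq, coe_filter, mem_product, mem_range, Set.mem_setOf_eq]
    constructor
    · rintro ⟨h1, h2⟩
      have h4 : i ≤ i * q := Nat.le_mul_of_pos_right i hq0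
      exact ⟨⟨by omega, by omega⟩, h2⟩
    · rintro ⟨⟨-, hj⟩, h2⟩
      exact ⟨by omega, h2⟩
  have h1 : Nat.card {ij : ℕ × ℕ // ij.2 ≤ q - 1 ∧ ij.1 * q + ij.2 * (q + 1) ≤ r}
      = F.card := by
    have e : Nat.card {ij : ℕ × ℕ // ij.2 ≤ q - 1 ∧ ij.1 * q + ij.2 * (q + 1) ≤ r}
        = Nat.card ({ij : ℕ × ℕ | ij.2 ≤ q - 1 ∧ ij.1 * q + ij.2 * (q + 1) ≤ r} : Set (ℕ × ℕ)) :=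
      rfl
    rw [e, hset, Nat.card_coe_set_eq, Set.ncard_coe_finset]
  rw [h1]
  have h2 : F.card = ∑ j ∈ Finset.range q, (F.filter (fun x => x.2 = j)).card := by
    apply Finset.card_eq_sum_card_fiberwise
    intro x hx
    simp only [hF, Finset.mem_coe, mem_filter, mem_product, mem_range] at hx
    simp [hx.1.2]
  rw [h2]
  unfold hermCnt
  apply Finset.sum_congr rfl
  intro j hj
  rw [← herm_inner q r j hq0]
  have himg : F.filter (fun x => x.2 = j)
      = ((Finset.range (r+1)).filter (fun i => i * q + j * (q+1) ≤ r)).image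
          (fun i => (i, j)) := by
    ext ⟨a, b⟩
    simp only [hF, mem_filter, mem_product, mem_range, Finset.mem_image, Prod.mk.injEq]
    constructor
    · rintro ⟨⟨⟨ha, hb⟩, hab⟩, rfl⟩
      exact ⟨a, ⟨ha, hab⟩, rfl, rfl⟩
    · rintro ⟨i, ⟨hi, hcond⟩, rfl, rfl⟩
      exact ⟨⟨⟨hi, by simpa using hj⟩, hcond⟩, rfl⟩
  rw [himg, Finset.card_image_of_injective]
  intro a b hab
  simpa using congrArg Prod.fst hab

private lemma herm_mod_iff (q r j : ℕ) (hq : 2 ≤ q) (hj : j < q)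
    (hle : (q+1)*j ≤ r+1) :
    (q ∣ (r+1) - (q+1)*j) ↔ j = (r+1) % q := by
  have h1 : (q+1)*j ≡ r+1 [MOD q] ↔ q ∣ (r+1) - (q+1)*j :=
    Nat.modEq_iff_dvd' hle
  rw [← h1]
  have h2 : (q+1)*j ≡ j [MOD q] := by
    show ((q+1)*j) % q = j % q
    conv_lhs => rw [show (q+1)*j = j + j*q by ring]
    rw [Nat.add_mul_mod_self_right]
  constructor
  · intro h
    have h3 : j ≡ r+1 [MOD q] := h2.symm.trans h
    have := h3.symm
    unfold Nat.ModEq at this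
    rw [Nat.mod_eq_of_lt hj] at this
    omega
  · intro h
    refine h2.trans ?_
    show j % q = (r+1) % q
    rw [Nat.mod_eq_of_lt hj, h]

private lemma hermCnt_succ (q r : ℕ) (hq : 2 ≤ q) (hr : q*(q-1) ≤ r) :
    hermCnt q (r+1) = hermCnt q r + 1 := by
  have hq0 : 0 < q := by omega
  set j0 := (r+1) % q with hj0def
  have hj0 : j0 < q := Nat.mod_lt _ hq0
  have hle0 : (q+1)*j0 ≤ r+1 := by
    have hdm : q * ((r+1)/q) + (r+1) % q = r+1 := Nat.div_add_mod (r+1) q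
    have h1 : q - 1 ≤ (r+1)/q := by
      rw [Nat.le_div_iff_mul_le hq0]
      calc (q-1) * q = q * (q-1) := by ring
        _ ≤ r + 1 := by omega
    have h2 : j0 ≤ (r+1)/q := by omega
    calc (q+1)*j0 = q*j0 + j0 := by ring
      _ ≤ q*((r+1)/q) + (r+1) % q := by
          have := Nat.mul_le_mul_left q h2
          omega
      _ = r+1 := hdm
  have key : ∀ j ∈ Finset.range q,
      (if (q+1)*j ≤ r+1 then (r+1 - (q+1)*j)/q + 1 else 0)
        = (if (q+1)*j ≤ r then (r - (q+1)*j)/q + 1 else 0)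
          + (if j = j0 then 1 else 0) := by
    intro j hjmem
    have hj : j < q := Finset.mem_range.1 hjmem
    by_cases h : (q+1)*j ≤ r
    · have h' : (q+1)*j ≤ r+1 := by omega
      rw [if_pos h, if_pos h']
      have ha : r + 1 - (q+1)*j = (r - (q+1)*j) + 1 := by omega
      rw [ha, Nat.succ_div]
      have hdvd : (q ∣ (r - (q+1)*j) + 1) ↔ j = j0 := by
        have : (r - (q+1)*j) + 1 = r + 1 - (q+1)*j := by omega
        rw [this]
        exact herm_mod_iff q r j hq hj h'
      by_cases hj0eq : j = j0
      · rw [if_pos (hdvd.2 hj0eq), if_pos hj0eq]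
      · rw [if_neg (fun hd => hj0eq (hdvd.1 hd)), if_neg hj0eq]
    · rw [if_neg h]
      by_cases h' : (q+1)*j ≤ r+1
      · rw [if_pos h']
        have heq : (q+1)*j = r+1 := by omega
        have : j = j0 := by
          apply (herm_mod_iff q r j hq hj h').1
          rw [heq]
          simp
        rw [if_pos this]
        have : r + 1 - (q+1)*j = 0 := by omega
        rw [this]
        simp [Nat.zero_div]
      · rw [if_neg h']
        have : j ≠ j0 := by
          intro hEq
          rw [hEq] at h'
          exact h' hle0
        rw [if_neg this]
  unfold hermCnt
  rw [Finset.sum_congr rfl key, Finset.sum_add_distrib]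
  congr 1
  rw [Finset.sum_ite_eq' (Finset.range q) j0 (fun _ => 1)]
  simp [hj0]

private lemma hermCnt_base (q : ℕ) (hq : 2 ≤ q) :
    hermCnt q (q*(q-1)) = q*(q-1)/2 + 1 := by
  have hq0 : 0 < q := by omega
  have key : ∀ j ∈ Finset.range q,
      (if (q+1)*j ≤ q*(q-1) then (q*(q-1) - (q+1)*j)/q + 1 else 0)
        = (q - 1 - j) + (if j = 0 then 1 else 0) := by
    intro j hjmem
    have hj : j < q := Finset.mem_range.1 hjmem
    by_cases hj0 : j = 0
    · subst hj0
      have hcond : (q+1)*0 ≤ q*(q-1) := by simp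
      rw [if_pos hcond, if_pos rfl]
      simp only [Nat.mul_zero, Nat.sub_zero]
      rw [Nat.mul_div_cancel_left _ hq0]
    · rw [if_neg hj0]
      by_cases h : (q+1)*j ≤ q*(q-1)
      · rw [if_pos h]
        -- here j ≤ q - 2
        have hjq2 : j + 2 ≤ q := by
          by_contra hc
          have hjq : j = q - 1 := by omega
          subst hjq
          have h1 : q * (q-1) < (q+1) * (q-1) := by
            apply Nat.mul_lt_mul_of_lt_of_le <;> omega
          omega
        obtain ⟨a, ha⟩ : ∃ a, q = j + 2 + a := ⟨q - 2 - j, by omega⟩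
        have hq1 : q - 1 = j + 1 + a := by omega
        have hdiff : q*(q-1) - (q+1)*j = (a+2) + a*q := by
          have hexp : q*(q-1) = (a+2) + a*q + (q+1)*j := by
            rw [hq1, ha]; ring
          omega
        rw [hdiff]
        rw [Nat.add_mul_div_right _ _ hq0]
        have : (a+2)/q = 0 := Nat.div_eq_of_lt (by omega)
        rw [this]
        omega
      · rw [if_neg h]
        -- then j = q-1
        have : j = q - 1 := by
          by_contra hc
          have hjq2 : j + 2 ≤ q := by omega
          obtain ⟨a, ha⟩ : ∃ a, q = j + 2 + a := ⟨q - 2 - j, by omega⟩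
          have hq1 : q - 1 = j + 1 + a := by omega
          apply h
          have hexp : q*(q-1) = (a+2) + a*q + (q+1)*j := by
            rw [hq1, ha]; ring
          omega
        omega
  unfold hermCnt
  rw [Finset.sum_congr rfl key, Finset.sum_add_distrib]
  have h1 : ∑ j ∈ Finset.range q, (q - 1 - j) = ∑ j ∈ Finset.range q, j := by
    rw [← Finset.sum_range_reflect]
    apply Finset.sum_congr rfl
    intro j hj
    have := Finset.mem_range.1 hj
    omega
  have h2 : ∑ j ∈ Finset.range q, j = q * (q-1) / 2 := by
    have := Finset.sum_range_id_mul_two q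
    omega
  have h3 : ∑ j ∈ Finset.range q, (if j = 0 then 1 else 0) = 1 := by
    rw [Finset.sum_ite_eq' (Finset.range q) 0 (fun _ => 1)]
    simp [hq0]
  rw [h1, h2, h3]

theorem hermitian_monomial_count (q r : ℕ) (hq : IsPrimePow q)
    (hr1 : q * (q - 1) ≤ r) (hr2 : r < q ^ 3) :
    Nat.card {ij : ℕ × ℕ // ij.2 ≤ q - 1 ∧ ij.1 * q + ij.2 * (q + 1) ≤ r}
      + q * (q - 1) / 2 = r + 1 := by
  have hq2 : 2 ≤ q := hq.two_le
  have heven : 2 ∣ q * (q - 1) := by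
    rcases Nat.even_or_odd q with h | h
    · exact Dvd.dvd.mul_right h.two_dvd _
    · have : Even (q - 1) := by
        rcases h with ⟨k, hk⟩
        exact ⟨k, by omega⟩
      exact Dvd.dvd.mul_left this.two_dvd _
  have h2g : q * (q - 1) / 2 * 2 = q * (q - 1) := Nat.div_mul_cancel heven
  have main : ∀ s, q*(q-1) ≤ s → hermCnt q s + q * (q - 1) / 2 = s + 1 := by
    intro s hs
    induction s, hs using Nat.le_induction with
    | base => rw [hermCnt_base q hq2]; omega
    | succ n hn ih => rw [hermCnt_succ q n hq2 hn]; omega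
  rw [card_eq_hermCnt q r hq2]
  exact main r hr1
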